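/- Fix constants 0 < τ ≤ 1, 0 < c ≤ 1, and ε_0 ∈ (0,1/2). Then for all sufficiently large positive integers M there exists a set W_M ⊆ {0, 1, …, M−1} satisfying: (i) #W_M > (c·ε_0·M/20)^(1/(1+τ)); (ii) for every ℓ ∈ {0, …, M−1}, if x, y, z ∈ 𝕀(W_M + ℓ) satisfy t·x + (1−t)·y = z for some t ∈ 𝓔_{c,τ} ∩ (ε_0, 1−ε_0), then there exists j ∈ W_M such that x, y, z all lie in the single interval I_{M, j+ℓ}. -/

import Mathlib

/-- The set `𝓔_{c,τ}` of badly approximable numbers in `(0,1)`: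
`|t − q/p| > c / p^(1+τ)` for every rational `q/p` in lowest terms. -/
def badlyApprox (c τ : ℝ) : Set ℝ :=
  {t | t ∈ Set.Ioo (0 : ℝ) 1 ∧
    ∀ (p : ℕ) (q : ℤ), 0 < p → Int.gcd (p : ℤ) q = 1 →
      c / (p : ℝ) ^ ((1 : ℝ) + τ) < |t - (q : ℝ) / (p : ℝ)|}

/-- The basic interval `I_{M,j} = [j'/M, (j'+1)/M] ⊆ [0,1]` where
`j' = j mod M`. -/
def Imj (M j : ℕ) : Set ℝ :=
  Set.Icc (((j % M : ℕ) : ℝ) / M) ((((j % M : ℕ) : ℝ) + 1) / M)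

/-- `𝕀(Y + ℓ)`: the union of the intervals `I_{M, y + ℓ (mod M)}` over `y ∈ Y`. -/
def II (M : ℕ) (Y : Finset ℕ) (ℓ : ℕ) : Set ℝ :=
  ⋃ j ∈ Y, Imj M (j + ℓ)

private lemma key14 (c τ : ℝ) (hc : 0 < c) (hτ : 0 < τ) (hτ1 : τ ≤ 1) (t : ℝ)
    (ht : t ∈ badlyApprox c τ) (N M : ℕ) (hN : 0 < N) (hM : 0 < M)
    (hNM : (N : ℝ) ^ ((1 : ℝ) + τ) ≤ c * M / 6)
    (J J' : ℤ) (hJ : J ≠ 0) (hJle : J.natAbs ≤ 2 * N)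
    (hclose : |t * J - J'| ≤ 3 * N / M) : False := by
  set g : ℕ := Int.gcd J J' with hg
  have hgJ : (g : ℤ) ∣ J := Int.gcd_dvd_left J J'
  have hgJ' : (g : ℤ) ∣ J' := Int.gcd_dvd_right J J'
  have hg0 : 0 < g := Int.gcd_pos_iff.mpr (Or.inl hJ)
  have hgdvd : g ∣ J.natAbs := Int.natCast_dvd_natCast.mp (Int.dvd_natAbs.mpr hgJ)
  set p : ℕ := J.natAbs / g with hp
  have hp0 : 0 < p := Nat.div_pos (Nat.le_of_dvd (Int.natAbs_pos.mpr hJ) hgdvd) hg0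
  set q : ℤ := J.sign * (J' / g) with hq
  have hpabs : p = (J / g).natAbs := by
    rw [hp, Int.natAbs_ediv_of_dvd hgJ, Int.natAbs_natCast]
  have hgcd : Int.gcd (p : ℤ) q = 1 := by
    have h1 : Int.gcd (J / g) (J' / g) = 1 := Int.gcd_div_gcd_div_gcd hg0
    have hsign : (J.sign).natAbs = 1 := by
      rcases Int.lt_or_lt_of_ne hJ with h | h
      · simp [Int.sign_eq_neg_one_of_neg h]
      · simp [Int.sign_eq_one_of_pos h]
    unfold Int.gcd
    rw [Int.natAbs_natCast, hpabs, hq, Int.natAbs_mul, hsign, one_mul]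
    exact h1
  have happ := ht.2 p q hp0 hgcd
  have hgR : (0:ℝ) < g := by exact_mod_cast hg0
  have hJR : (J:ℝ) ≠ 0 := Int.cast_ne_zero.mpr hJ
  have hpR : (0:ℝ) < p := by exact_mod_cast hp0
  have hpg : (p : ℤ) * g = J.natAbs := by
    exact_mod_cast Nat.div_mul_cancel hgdvd
  have hqg : (J' / g) * g = J' := Int.ediv_mul_cancel hgJ'
  have hqJ : q * J * g = J' * p * g := by
    have hsJ : J.sign * J = (J.natAbs : ℤ) := by
      rcases Int.lt_or_lt_of_ne hJ with h | h
      · rw [Int.sign_eq_neg_one_of_neg h]; omega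
      · rw [Int.sign_eq_one_of_pos h]; omega
    calc q * J * g = (J.sign * J) * ((J' / g) * g) := by ring
    _ = (J.natAbs : ℤ) * J' := by rw [hsJ, hqg]
    _ = J' * ((p:ℤ) * g) := by rw [hpg]; ring
    _ = J' * p * g := by ring
  have hqJ' : (q : ℝ) * J = J' * p := by
    have : q * J = J' * p := by
      have hgz : (g:ℤ) ≠ 0 := by exact_mod_cast hg0.ne'
      exact mul_right_cancel₀ hgz hqJ
    exact_mod_cast this
  have habs : |t - (q:ℝ)/p| = |t * J - J'| / |(J:ℝ)| := by
    rw [← abs_div]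
    congr 1
    field_simp
    linarith [hqJ']
  have hJabs1 : (1:ℝ) ≤ |(J:ℝ)| := by
    rw [← Int.cast_abs]
    exact_mod_cast Int.one_le_abs (by omega)
  have hJabs0 : (0:ℝ) < |(J:ℝ)| := by linarith
  have hpleJ : (p:ℝ) ≤ |(J:ℝ)| := by
    rw [← Int.cast_abs, Int.abs_eq_natAbs]
    exact_mod_cast Nat.div_le_self _ _
  have hNR : (0:ℝ) < N := by exact_mod_cast hN
  have hMR : (0:ℝ) < M := by exact_mod_cast hM
  have hppow : (p:ℝ) ^ ((1:ℝ) + τ) ≤ |(J:ℝ)| ^ ((1:ℝ) + τ) :=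
    Real.rpow_le_rpow (by positivity) hpleJ (by linarith)
  have hJpow : |(J:ℝ)| ^ ((1:ℝ) + τ) ≤ |(J:ℝ)| * (2 * (N:ℝ) ^ τ) := by
    have h1 : |(J:ℝ)| ^ ((1:ℝ) + τ) = |(J:ℝ)| * |(J:ℝ)| ^ τ := by
      rw [Real.rpow_add hJabs0, Real.rpow_one]
    rw [h1]
    apply mul_le_mul_of_nonneg_left _ (le_of_lt hJabs0)
    calc |(J:ℝ)| ^ τ ≤ ((2 * N : ℕ):ℝ) ^ τ := by
          apply Real.rpow_le_rpow (abs_nonneg _) _ hτ.le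
          rw [← Int.cast_abs, Int.abs_eq_natAbs]
          exact_mod_cast hJle
    _ = (2:ℝ) ^ τ * (N:ℝ) ^ τ := by
          push_cast
          rw [Real.mul_rpow (by norm_num) (le_of_lt hNR)]
    _ ≤ 2 * (N:ℝ) ^ τ := by
          apply mul_le_mul_of_nonneg_right _ (by positivity)
          calc (2:ℝ) ^ τ ≤ (2:ℝ) ^ (1:ℝ) :=
                Real.rpow_le_rpow_of_exponent_le (by norm_num) hτ1
          _ = 2 := Real.rpow_one 2
  have hNpow : (N:ℝ) * (N:ℝ) ^ τ ≤ c * M / 6 := by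
    calc (N:ℝ) * (N:ℝ) ^ τ = (N:ℝ) ^ ((1:ℝ) + τ) := by
          rw [Real.rpow_add hNR, Real.rpow_one]
    _ ≤ c * M / 6 := hNM
  have hchain : c / |(J:ℝ)| ^ ((1:ℝ) + τ) < 3 * N / (M * |(J:ℝ)|) := by
    calc c / |(J:ℝ)| ^ ((1:ℝ) + τ) ≤ c / (p:ℝ) ^ ((1:ℝ) + τ) := by
          apply div_le_div_of_nonneg_left hc.le (by positivity) hppow
    _ < |t - (q:ℝ)/p| := happ
    _ = |t * J - J'| / |(J:ℝ)| := habs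
    _ ≤ (3 * N / M) / |(J:ℝ)| := by gcongr
    _ = 3 * N / (M * |(J:ℝ)|) := by rw [div_div]
  have hcross : c * (M * |(J:ℝ)|) < 3 * N * |(J:ℝ)| ^ ((1:ℝ) + τ) :=
    (div_lt_div_iff₀ (by positivity) (by positivity)).mp hchain
  nlinarith [mul_le_mul_of_nonneg_left hJpow (by positivity : (0:ℝ) ≤ 3 * (N:ℝ)),
    mul_le_mul_of_nonneg_left hNpow (by positivity : (0:ℝ) ≤ 6 * |(J:ℝ)|)]

private lemma pointdata14 (M N ℓ i : ℕ) (hM : 0 < M) (hN : 0 < N) (hℓ : ℓ < M)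
    (hi : i < N) :
    ∃ (e u γ : ℕ), e ≤ 1 ∧ γ < N ∧ u = (i * M / N + ℓ) % M ∧
      (N : ℝ) * u = i * M - γ + N * ℓ - N * M * e := by
  refine ⟨(i * M / N + ℓ) / M, (i * M / N + ℓ) % M, i * M % N, ?_,
    Nat.mod_lt _ hN, rfl, ?_⟩
  · have hjM : i * M / N < M :=
      Nat.div_lt_of_lt_mul (mul_lt_mul_of_pos_right hi hM)
    have h2 : (i * M / N + ℓ) / M < 2 :=
      (Nat.div_lt_iff_lt_mul hM).mpr (by omega)
    omega
  · have h1 := Nat.div_add_mod (i * M) N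
    have h2 := Nat.div_add_mod (i * M / N + ℓ) M
    have h1' : (N : ℝ) * (↑(i * M / N)) + ↑(i * M % N) = (i : ℝ) * M := by
      exact_mod_cast congrArg (Nat.cast : ℕ → ℝ) h1
    have h2' : (M : ℝ) * (↑((i * M / N + ℓ) / M)) + ↑((i * M / N + ℓ) % M)
        = (↑(i * M / N) : ℝ) + ℓ := by
      exact_mod_cast congrArg (Nat.cast : ℕ → ℝ) h2
    linear_combination h1' + (N : ℝ) * h2'

private lemma conv14 (t x y z lo hi : ℝ) (ht0 : 0 < t) (ht1 : t < 1)
    (hx1 : lo ≤ x) (hx2 : x ≤ hi) (hy1 : lo ≤ y) (hy2 : y ≤ hi)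
    (heq : t * x + (1 - t) * y = z) : lo ≤ z ∧ z ≤ hi := by
  have h1t : (0:ℝ) ≤ 1 - t := by linarith
  constructor
  · nlinarith [mul_nonneg ht0.le (sub_nonneg.mpr hx1),
      mul_nonneg h1t (sub_nonneg.mpr hy1)]
  · nlinarith [mul_nonneg ht0.le (sub_nonneg.mpr hx2),
      mul_nonneg h1t (sub_nonneg.mpr hy2)]

private lemma geom14 (t Mr Nr ua ub uc γa γb γc Jr J'r x y z : ℝ)
    (hMr : 0 < Mr) (hNr : 0 ≤ Nr) (ht0 : 0 < t) (ht1 : t < 1)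
    (hx1 : ua ≤ Mr * x) (hx2 : Mr * x ≤ ua + 1)
    (hy1 : ub ≤ Mr * y) (hy2 : Mr * y ≤ ub + 1)
    (hz1 : uc ≤ Mr * z) (hz2 : Mr * z ≤ uc + 1)
    (heq : t * x + (1 - t) * y = z)
    (hγa : 0 ≤ γa) (hγa' : γa ≤ Nr) (hγb : 0 ≤ γb) (hγb' : γb ≤ Nr)
    (hγc : 0 ≤ γc) (hγc' : γc ≤ Nr)
    (E : Mr * (t * Jr - J'r)
      = Nr * (t * ua + (1 - t) * ub - uc) + t * γa + (1 - t) * γb - γc) :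
    |t * Jr - J'r| ≤ 3 * Nr / Mr := by
  have h1t : (0:ℝ) ≤ 1 - t := by linarith
  have hMz : Mr * z = t * (Mr * x) + (1 - t) * (Mr * y) := by rw [← heq]; ring
  have m1 : t * ua + (1 - t) * ub - uc ≤ 1 := by
    nlinarith [mul_le_mul_of_nonneg_left hx1 ht0.le,
      mul_le_mul_of_nonneg_left hy1 h1t]
  have m2 : -1 ≤ t * ua + (1 - t) * ub - uc := by
    nlinarith [mul_le_mul_of_nonneg_left hx2 ht0.le,
      mul_le_mul_of_nonneg_left hy2 h1t]
  have t2 : t * γa ≤ t * Nr := mul_le_mul_of_nonneg_left hγa' ht0.le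
  have t3 : (1 - t) * γb ≤ (1 - t) * Nr := mul_le_mul_of_nonneg_left hγb' h1t
  have t2' : (0:ℝ) ≤ t * γa := mul_nonneg ht0.le hγa
  have t3' : (0:ℝ) ≤ (1 - t) * γb := mul_nonneg h1t hγb
  have u1 : Nr * (t * ua + (1 - t) * ub - uc) ≤ Nr * 1 :=
    mul_le_mul_of_nonneg_left m1 hNr
  have u2 : Nr * (-1) ≤ Nr * (t * ua + (1 - t) * ub - uc) :=
    mul_le_mul_of_nonneg_left m2 hNr
  rw [abs_le]
  constructor
  · rw [neg_le, le_div_iff₀ hMr]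
    nlinarith [E]
  · rw [le_div_iff₀ hMr]
    nlinarith [E]

set_option maxHeartbeats 2000000 in
theorem stmt14 (τ c ε₀ : ℝ) (hτ : 0 < τ) (hτ1 : τ ≤ 1) (hc : 0 < c) (hc1 : c ≤ 1)
    (hε₀ : ε₀ ∈ Set.Ioo (0 : ℝ) (1 / 2)) :
    ∃ M₀ : ℕ, ∀ M : ℕ, M₀ ≤ M →
      ∃ W : Finset ℕ, W ⊆ Finset.range M ∧
        (c * ε₀ * M / 20) ^ ((1 : ℝ) / (1 + τ)) < (W.card : ℝ) ∧
        ∀ ℓ : ℕ, ℓ < M → ∀ t ∈ badlyApprox c τ ∩ Set.Ioo ε₀ (1 - ε₀),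
          ∀ x y z : ℝ, x ∈ II M W ℓ → y ∈ II M W ℓ → z ∈ II M W ℓ →
            t * x + (1 - t) * y = z →
            ∃ j ∈ W, x ∈ Imj M (j + ℓ) ∧ y ∈ Imj M (j + ℓ) ∧ z ∈ Imj M (j + ℓ) := by
  obtain ⟨hε0, hε2⟩ := hε₀
  refine ⟨max 1 (Nat.ceil (20 / (c * ε₀))), fun M hM => ?_⟩
  -- numerical setup
  have hcε : 0 < c * ε₀ := mul_pos hc hε0
  have h1 : ((Nat.ceil (20 / (c * ε₀)) : ℕ) : ℝ) ≤ M :=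
    Nat.cast_le.mpr (le_trans (le_max_right _ _) hM)
  have h2 : 20 / (c * ε₀) ≤ (M : ℝ) := le_trans (Nat.le_ceil _) h1
  have hM20 : (20 : ℝ) ≤ c * ε₀ * M := by
    calc (20:ℝ) = (20/(c*ε₀)) * (c*ε₀) := by field_simp
    _ ≤ M * (c*ε₀) := mul_le_mul_of_nonneg_right h2 hcε.le
    _ = c * ε₀ * M := by ring
  have hMR20 : (20:ℝ) ≤ M := by nlinarith
  have hM0 : 0 < M := by exact_mod_cast Nat.cast_pos.mp (by linarith : (0:ℝ) < M)
  have hMR : (0:ℝ) < M := by exact_mod_cast hM0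
  have hτ0' : (0:ℝ) < 1 + τ := by linarith
  set e : ℝ := 1/(1+τ) with he_def
  have he : 0 < e := by positivity
  have he2 : 1/2 ≤ e := by
    rw [he_def, div_le_div_iff₀ (by norm_num) hτ0']; linarith
  set Y : ℝ := c * ε₀ * M / 20 with hY_def
  have hY1 : 1 ≤ Y := by rw [hY_def]; linarith
  set X : ℝ := Y ^ e with hX_def
  have hX1 : 1 ≤ X := by
    rw [hX_def]
    calc (1:ℝ) = 1 ^ e := (Real.one_rpow e).symm
    _ ≤ Y ^ e := Real.rpow_le_rpow zero_le_one hY1 he.le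
  set B : ℝ := c * M / 6 with hB_def
  have hB0 : 0 < B := by rw [hB_def]; positivity
  have hB4Y : 4 * Y ≤ B := by
    rw [hB_def, hY_def]
    nlinarith [mul_pos hc (show (0:ℝ) < M by linarith)]
  set A : ℝ := B ^ e with hA_def
  have hA2X : 2 * X ≤ A := by
    have h4 : ((4:ℝ) * Y) ^ e = 4 ^ e * Y ^ e :=
      Real.mul_rpow (by norm_num) (by linarith)
    have h42 : (2:ℝ) ≤ 4 ^ e := by
      have h44 : (4:ℝ) ^ e = 2 ^ (2 * e) := by
        rw [show (4:ℝ) = 2 ^ (2:ℝ) by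
          rw [show (2:ℝ) = ((2:ℕ):ℝ) by norm_num, Real.rpow_natCast]; norm_num]
        rw [← Real.rpow_mul (by norm_num)]
      rw [h44]
      calc (2:ℝ) = 2 ^ (1:ℝ) := (Real.rpow_one 2).symm
      _ ≤ 2 ^ (2 * e) := Real.rpow_le_rpow_of_exponent_le (by norm_num) (by linarith)
    calc 2 * X ≤ 4 ^ e * Y ^ e := by
          rw [hX_def]
          exact mul_le_mul_of_nonneg_right h42 (by positivity)
    _ = (4 * Y) ^ e := h4.symm
    _ ≤ B ^ e := Real.rpow_le_rpow (by linarith) hB4Y he.le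
  set N : ℕ := Nat.floor A with hN_def
  have hNA : (N : ℝ) ≤ A := Nat.floor_le (by positivity)
  have hNA1 : A < (N : ℝ) + 1 := by exact_mod_cast Nat.lt_floor_add_one A
  have hXN : X < (N : ℝ) := by linarith
  have hN1R : (1:ℝ) ≤ (N : ℝ) := by linarith
  have hN0 : 0 < N := by exact_mod_cast Nat.cast_pos.mp (by linarith : (0:ℝ) < N)
  have hNR : (0:ℝ) < N := by exact_mod_cast hN0
  have hNpow : (N : ℝ) ^ ((1:ℝ) + τ) ≤ c * M / 6 := by
    calc (N : ℝ) ^ ((1:ℝ)+τ) ≤ A ^ ((1:ℝ)+τ) :=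
          Real.rpow_le_rpow (by positivity) hNA (by linarith)
    _ = B ^ (e * (1+τ)) := by rw [hA_def, ← Real.rpow_mul hB0.le]
    _ = B ^ (1:ℝ) := by congr 1; rw [he_def]; field_simp
    _ = B := Real.rpow_one B
  have hNltM : N < M := by
    have hfl : (N : ℝ) ≤ B := by
      calc (N:ℝ) = (N:ℝ) ^ (1:ℝ) := (Real.rpow_one _).symm
      _ ≤ (N:ℝ) ^ ((1:ℝ)+τ) := Real.rpow_le_rpow_of_exponent_le hN1R (by linarith)
      _ ≤ B := by rw [hB_def]; exact hNpow
    have : (N : ℝ) < M := by rw [hB_def] at hfl; nlinarith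
    exact_mod_cast this
  have hNleM : N ≤ M := hNltM.le
  -- the set W
  have hdivlt : ∀ i, i < N → i * M / N < M := fun i hi =>
    Nat.div_lt_of_lt_mul (mul_lt_mul_of_pos_right hi hM0)
  have hmono : ∀ i i', i < i' → i' < N → i * M / N < i' * M / N := by
    intro i i' hii hi'
    have step : i * M / N + 1 ≤ (i + 1) * M / N := by
      rw [Nat.le_div_iff_mul_le hN0]
      calc (i * M / N + 1) * N = (i * M / N) * N + N := by ring
      _ ≤ i * M + M := add_le_add (Nat.div_mul_le_self _ _) hNleM
      _ = (i + 1) * M := by ring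
    calc i * M / N < (i + 1) * M / N := by omega
    _ ≤ i' * M / N := Nat.div_le_div_right (Nat.mul_le_mul_right M (by omega))
  set W : Finset ℕ := (Finset.range N).image (fun i => i * M / N) with hW_def
  have hWsub : W ⊆ Finset.range M := by
    intro j hj
    obtain ⟨i, hi, rfl⟩ := Finset.mem_image.mp hj
    exact Finset.mem_range.mpr (hdivlt i (Finset.mem_range.mp hi))
  have hinj : Set.InjOn (fun i => i * M / N) ↑(Finset.range N) := by
    intro a ha b hb hab
    simp only [Finset.coe_range, Set.mem_Iio] at ha hb
    rcases lt_trichotomy a b with h | h | h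
    · exact absurd hab (Nat.ne_of_lt (hmono a b h hb))
    · exact h
    · exact absurd hab.symm (Nat.ne_of_lt (hmono b a h ha))
  have hcard : W.card = N := by
    rw [hW_def, Finset.card_image_of_injOn hinj, Finset.card_range]
  refine ⟨W, hWsub, by rw [hcard]; exact hXN, ?_⟩
  -- main combinatorial statement
  intro ℓ hℓ t ht x y z hx hy hz heq
  obtain ⟨htB, htI⟩ := ht
  have ht0 : 0 < t := htB.1.1
  have ht1 : t < 1 := htB.1.2
  have h1t : (0:ℝ) ≤ 1 - t := by linarith
  simp only [II, Set.mem_iUnion, exists_prop] at hx hy hz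
  obtain ⟨jx, hjxW, hxj⟩ := hx
  obtain ⟨jy, hjyW, hyj⟩ := hy
  obtain ⟨jz, hjzW, hzj⟩ := hz
  obtain ⟨ia, hiaR, rfl⟩ := Finset.mem_image.mp hjxW
  obtain ⟨ib, hibR, rfl⟩ := Finset.mem_image.mp hjyW
  obtain ⟨ic, hicR, rfl⟩ := Finset.mem_image.mp hjzW
  have hiaN : ia < N := Finset.mem_range.mp hiaR
  have hibN : ib < N := Finset.mem_range.mp hibR
  have hicN : ic < N := Finset.mem_range.mp hicR
  simp only [Imj, Set.mem_Icc] at hxj hyj hzj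
  by_cases hab : ia = ib
  · -- same interval: convexity
    subst hab
    refine ⟨ia * M / N, hjxW, ?_, ?_, ?_⟩ <;>
      simp only [Imj, Set.mem_Icc]
    · exact hxj
    · exact hyj
    exact conv14 t x y z _ _ ht0 ht1 hxj.1 hxj.2 hyj.1 hyj.2 heq
  · -- different intervals: impossible
    exfalso
    obtain ⟨ea, ua, γa, hea, hγa, hua, hNua⟩ := pointdata14 M N ℓ ia hM0 hN0 hℓ hiaN
    obtain ⟨eb, ub, γb, heb, hγb, hub, hNub⟩ := pointdata14 M N ℓ ib hM0 hN0 hℓ hibN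
    obtain ⟨ec, uc, γc, hec, hγc, huc, hNuc⟩ := pointdata14 M N ℓ ic hM0 hN0 hℓ hicN
    rw [← hua] at hxj
    rw [← hub] at hyj
    rw [← huc] at hzj
    have hx1 : (ua:ℝ) ≤ M * x := by
      have := hxj.1; rw [div_le_iff₀ hMR] at this; linarith
    have hx2 : (M:ℝ) * x ≤ ua + 1 := by
      have := hxj.2; rw [le_div_iff₀ hMR] at this; linarith
    have hy1 : (ub:ℝ) ≤ M * y := by
      have := hyj.1; rw [div_le_iff₀ hMR] at this; linarith
    have hy2 : (M:ℝ) * y ≤ ub + 1 := by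
      have := hyj.2; rw [le_div_iff₀ hMR] at this; linarith
    have hz1 : (uc:ℝ) ≤ M * z := by
      have := hzj.1; rw [div_le_iff₀ hMR] at this; linarith
    have hz2 : (M:ℝ) * z ≤ uc + 1 := by
      have := hzj.2; rw [le_div_iff₀ hMR] at this; linarith
    have hJne : ((ia:ℤ) - ib - ((ea:ℤ) - eb) * N) ≠ 0 := by
      have hab' : ia ≠ ib := hab
      rcases Nat.le_one_iff_eq_zero_or_eq_one.mp hea with rfl | rfl <;>
        rcases Nat.le_one_iff_eq_zero_or_eq_one.mp heb with rfl | rfl <;>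
        (push_cast; omega)
    have hJle : ((ia:ℤ) - ib - ((ea:ℤ) - eb) * N).natAbs ≤ 2 * N := by
      rcases Nat.le_one_iff_eq_zero_or_eq_one.mp hea with rfl | rfl <;>
        rcases Nat.le_one_iff_eq_zero_or_eq_one.mp heb with rfl | rfl <;>
        (push_cast; omega)
    have hcastJ : ((((ia:ℤ) - ib - ((ea:ℤ) - eb) * N : ℤ)) : ℝ)
        = (ia:ℝ) - ib - ((ea:ℝ) - eb) * N := by push_cast; ring
    have hcastJ' : ((((ic:ℤ) - ib - ((ec:ℤ) - eb) * N : ℤ)) : ℝ)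
        = (ic:ℝ) - ib - ((ec:ℝ) - eb) * N := by push_cast; ring
    have E : (M:ℝ) * (t * ((ia:ℝ) - ib - ((ea:ℝ) - eb) * N)
          - ((ic:ℝ) - ib - ((ec:ℝ) - eb) * N))
        = (N:ℝ) * (t * ua + (1-t) * ub - uc) + t * γa + (1-t) * γb - γc := by
      linear_combination hNuc - t * hNua - (1-t) * hNub
    have hγaR : (γa:ℝ) ≤ N := by exact_mod_cast hγa.le
    have hγbR : (γb:ℝ) ≤ N := by exact_mod_cast hγb.le
    have hγcR : (γc:ℝ) ≤ N := by exact_mod_cast hγc.le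
    have hclose : |t * ((((ia:ℤ) - ib - ((ea:ℤ) - eb) * N : ℤ)) : ℝ)
        - ((((ic:ℤ) - ib - ((ec:ℤ) - eb) * N : ℤ)) : ℝ)| ≤ 3 * N / M := by
      rw [hcastJ, hcastJ']
      exact geom14 t M N ua ub uc γa γb γc _ _ x y z hMR hNR.le ht0 ht1
        hx1 hx2 hy1 hy2 hz1 hz2 heq (Nat.cast_nonneg _) hγaR
        (Nat.cast_nonneg _) hγbR (Nat.cast_nonneg _) hγcR E
    exact key14 c τ hc hτ hτ1 t htB N M hN0 hM0 hNpow
      ((ia:ℤ) - ib - ((ea:ℤ) - eb) * N) ((ic:ℤ) - ib - ((ec:ℤ) - eb) * N)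
      hJne hJle hclose
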